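/- Let (λ, μ) be a codimension-3 decoration with k = ∑μⱼ, λ = (λ₁ ≥ λ₂ ≥ …), μ = (μ₁ ≥ …), other than the pair ((1,1,1),(1)). If μ₁ + λ₁ + λ₂ ≤ k+1, then the smallest minimal link S' of (λ, μ) satisfies: the smallest minimal link of S' equals (λ, μ) again; consequently every decoration satisfies μ₁ + λ₁ + λ₂ > k + 1. -/

import Mathlib

/-- Sort a list of integers in non-increasing order. -/
def rsort (l : List ℤ) : List ℤ := List.insertionSort (· ≥ ·) l

/-- Remove all non-positive parts (trailing zeros) from a partition. -/
def strip (l : List ℤ) : List ℤ := l.filter (fun x => 0 < x)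

/-- The smallest minimal link of a codimension-`c` pair of partitions `(λ, μ)`:
choose the `c` largest parts of `λ` (padding with zeros if needed), shift them by
`p = (c-2)k + 1 - (λ₁ + ⋯ + λ_c)` where `k = ∑ μⱼ`, merge with `μ` and re-sort;
the other partition becomes `(λ_{c+1}, …, λ_b)`. -/
def smlink (c : ℕ) (P : List ℤ × List ℤ) : List ℤ × List ℤ :=
  let p : ℤ := ((c : ℤ) - 2) * P.2.sum + 1 - (P.1.take c).sum
  (strip (rsort ((P.1.take c ++ List.replicate (c - P.1.length) 0).map (· + p) ++ P.2)),
   strip (P.1.drop c))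

/-- The smallest minimal link of `P` produces nonnegative parts, i.e. `λ_c + p ≥ 0`. -/
def ValidLink (c : ℕ) (P : List ℤ × List ℤ) : Prop :=
  0 ≤ P.1.getD (c - 1) 0 + (((c : ℤ) - 2) * P.2.sum + 1 - (P.1.take c).sum)

/-- A partition: a non-increasing list of positive integers. -/
def IsPartition (l : List ℤ) : Prop := l.Pairwise (· ≥ ·) ∧ ∀ x ∈ l, 0 < x

/-- A codimension-`c` decoration: a pair of partitions reachable to the complete
intersection pair `((1^c), (1))` by finitely many smallest minimal links, all of
whose intermediate links are valid (have nonnegative parts). -/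
def IsDecoration (c : ℕ) (P : List ℤ × List ℤ) : Prop :=
  IsPartition P.1 ∧ IsPartition P.2 ∧
  ∃ n : ℕ, (∀ m < n, ValidLink c ((smlink c)^[m] P)) ∧
    (smlink c)^[n] P = (List.replicate c 1, [1])

lemma rsort_sorted (l : List ℤ) : (rsort l).Pairwise (· ≥ ·) := List.pairwise_insertionSort _ l
lemma rsort_perm (l : List ℤ) : List.Perm (rsort l) l := List.perm_insertionSort _ l
lemma rsort_eq_self {l : List ℤ} (h : l.Pairwise (· ≥ ·)) : rsort l = l :=
  List.Perm.eq_of_pairwise' (rsort_sorted l) h (rsort_perm l)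
lemma strip_eq_self {l : List ℤ} (h : ∀ x ∈ l, 0 < x) : strip l = l :=
  List.filter_eq_self.2 (by simpa using h)
lemma strip_sum_of_nonneg {l : List ℤ} (h : ∀ x ∈ l, 0 ≤ x) : (strip l).sum = l.sum := by
  induction l with
  | nil => rfl
  | cons a t ih =>
    have ha := h a (by simp)
    have ih' := ih (fun x hx => h x (by simp [hx]))
    by_cases h0 : 0 < a
    · simp [strip, List.filter_cons, h0] at ih' ⊢; omega
    · have : a = 0 := le_antisymm (not_lt.1 h0) ha
      simp [strip, List.filter_cons, h0] at ih' ⊢; omega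

lemma t3_eq (l : List ℤ) :
    l.take 3 ++ List.replicate (3 - l.length) 0 = [l.getD 0 0, l.getD 1 0, l.getD 2 0] := by
  rcases l with _ | ⟨x, _ | ⟨y, _ | ⟨z, r⟩⟩⟩ <;> simp [List.take, List.replicate]

lemma take3_sum (l : List ℤ) : (l.take 3).sum = l.getD 0 0 + l.getD 1 0 + l.getD 2 0 := by
  rcases l with _ | ⟨x, _ | ⟨y, _ | ⟨z, r⟩⟩⟩ <;> simp <;> ring

lemma getD_facts {l : List ℤ} (hs : l.Pairwise (· ≥ ·)) (hp : ∀ x ∈ l, 0 < x) :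
    l.getD 1 0 ≤ l.getD 0 0 ∧ l.getD 2 0 ≤ l.getD 1 0 ∧ 0 ≤ l.getD 2 0 := by
  rcases l with _ | ⟨x, _ | ⟨y, _ | ⟨z, r⟩⟩⟩ <;>
    simp_all [List.pairwise_cons] <;> omega

lemma smlink3_eq (Q : List ℤ × List ℤ) (a b c p : ℤ) (ha : a = Q.1.getD 0 0)
    (hb : b = Q.1.getD 1 0) (hc : c = Q.1.getD 2 0)
    (hp : p = Q.2.sum + 1 - (a + b + c)) :
    smlink 3 Q = (strip (rsort ([a + p, b + p, c + p] ++ Q.2)), strip (Q.1.drop 3)) := by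
  subst ha hb hc hp
  simp only [smlink, t3_eq, take3_sum, List.map]
  norm_num

lemma isPartition_strip (l : List ℤ) (h : l.Pairwise (· ≥ ·)) : IsPartition (strip l) := by
  constructor
  · exact List.Pairwise.sublist (List.filter_sublist) h
  · intro x hx; have := List.mem_filter.1 hx; simpa using this.2

lemma smlink_partition (Q : List ℤ × List ℤ) (h1 : IsPartition Q.1) :
    IsPartition (smlink 3 Q).1 ∧ IsPartition (smlink 3 Q).2 := by
  constructor
  · exact isPartition_strip _ (rsort_sorted _)
  · exact isPartition_strip _ (List.Pairwise.sublist (List.drop_sublist 3 Q.1) h1.1)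

lemma validLink3 {Q : List ℤ × List ℤ} (hv : ValidLink 3 Q) :
    0 ≤ Q.1.getD 2 0 + (Q.2.sum + 1 - (Q.1.getD 0 0 + Q.1.getD 1 0 + Q.1.getD 2 0)) := by
  have hv2 : (0:ℤ) ≤ Q.1.getD 2 0 + ((((3:ℕ):ℤ) - 2) * Q.2.sum + 1 - (Q.1.take 3).sum) := hv
  rw [take3_sum] at hv2
  have hcast : ((3:ℕ):ℤ) = 3 := by norm_num
  rw [hcast] at hv2
  omega

lemma I_smlink (Q : List ℤ × List ℤ) (h1 : IsPartition Q.1) (h2 : ∀ x ∈ Q.2, 0 < x)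
    (hv : ValidLink 3 Q) :
    (smlink 3 Q).1.sum - 2 * (smlink 3 Q).2.sum - 1 = -2 * (Q.1.sum - 2 * Q.2.sum - 1) := by
  obtain ⟨hs, hp⟩ := h1
  obtain ⟨hab, hbc, hc0⟩ := getD_facts hs hp
  have hv' := validLink3 hv
  set a := Q.1.getD 0 0 with hA
  set b := Q.1.getD 1 0 with hB
  set c := Q.1.getD 2 0 with hC
  set k := Q.2.sum with hK
  set p : ℤ := k + 1 - (a + b + c) with hP
  have hv'' : 0 ≤ c + p := by omega
  rw [smlink3_eq Q a b c p hA hB hC (by omega)]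
  have hL : ∀ x ∈ ([a + p, b + p, c + p] ++ Q.2), (0:ℤ) ≤ x := by
    intro x hx
    rcases List.mem_append.1 hx with hx | hx
    · simp at hx; rcases hx with rfl | rfl | rfl <;> omega
    · exact le_of_lt (h2 x hx)
  have e1 : (strip (rsort ([a + p, b + p, c + p] ++ Q.2))).sum = a + b + c + 3 * p + k := by
    rw [strip_sum_of_nonneg (fun x hx => hL x ((rsort_perm _).subset hx)),
      (rsort_perm _).sum_eq]
    simp; ring
  have e2 : (strip (Q.1.drop 3)).sum = Q.1.sum - (a + b + c) := by
    rw [strip_eq_self (fun x hx => hp x (List.mem_of_mem_drop hx))]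
    have h3 : (Q.1.take 3).sum + (Q.1.drop 3).sum = Q.1.sum := by
      conv_rhs => rw [← List.take_append_drop 3 Q.1]
      rw [List.sum_append]
    rw [take3_sum] at h3; omega
  simp only [e1, e2]
  ring

lemma smlink_smlink (lam mu : List ℤ) (hl : IsPartition lam) (hm : IsPartition mu)
    (hmu : mu ≠ []) (hsum : lam.sum = 2 * mu.sum + 1)
    (hineq : mu.getD 0 0 + lam.getD 0 0 + lam.getD 1 0 ≤ mu.sum + 1) :
    smlink 3 (smlink 3 (lam, mu)) = (lam, mu) := by
  obtain ⟨hls, hlp⟩ := hl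
  obtain ⟨hms, hmp⟩ := hm
  obtain ⟨hab, hbc, hc0⟩ := getD_facts hls hlp
  set a := lam.getD 0 0 with hA
  set b := lam.getD 1 0 with hB
  set c := lam.getD 2 0 with hC
  set k := mu.sum with hK
  set p : ℤ := k + 1 - (a + b + c) with hP
  obtain ⟨m0, mr, rfl⟩ : ∃ m0 mr, mu = m0 :: mr := by
    rcases mu with _ | ⟨m0, mr⟩; · exact absurd rfl hmu
    exact ⟨m0, mr, rfl⟩
  have hm0 : ∀ x ∈ m0 :: mr, x ≤ m0 := by
    intro x hx
    rcases List.mem_cons.1 hx with rfl | hx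
    · exact le_refl x
    · exact (List.pairwise_cons.1 hms).1 x hx
  have hm0pos : 0 < m0 := hmp m0 (by simp)
  have hcp : m0 ≤ c + p := by
    have : m0 = (m0 :: mr).getD 0 0 := rfl
    omega
  have hxmu : ∀ x ∈ m0 :: mr, x ≤ c + p := fun x hx => le_trans (hm0 x hx) hcp
  have hLs : List.Pairwise (· ≥ ·) ([a + p, b + p, c + p] ++ (m0 :: mr)) := by
    simp only [List.cons_append, List.nil_append, List.pairwise_cons]
    refine ⟨?_, ?_, ?_, (List.pairwise_cons.1 hms).1, (List.pairwise_cons.1 hms).2⟩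
    · intro x hx
      simp only [List.mem_cons] at hx
      rcases hx with rfl | rfl | hx
      · omega
      · omega
      · have := hxmu x (by simpa using hx); omega
    · intro x hx
      simp only [List.mem_cons] at hx
      rcases hx with rfl | hx
      · omega
      · have := hxmu x (by simpa using hx); omega
    · intro x hx; exact hxmu x (by simpa using hx)
  have hLpos : ∀ x ∈ ([a + p, b + p, c + p] ++ (m0 :: mr)), 0 < x := by
    intro x hx
    rcases List.mem_append.1 hx with hx | hx
    · simp at hx; rcases hx with rfl | rfl | rfl <;> omega
    · exact hmp x hx
  have hdpos : ∀ x ∈ lam.drop 3, 0 < x := fun x hx => hlp x (List.mem_of_mem_drop hx)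
  have e1 : smlink 3 (lam, m0 :: mr) =
      ([a + p, b + p, c + p] ++ (m0 :: mr), lam.drop 3) := by
    rw [smlink3_eq (lam, m0 :: mr) a b c p hA hB hC (by rw [hP, hK])]
    rw [rsort_eq_self hLs, strip_eq_self hLpos, strip_eq_self hdpos]
  rw [e1]
  have hds : (lam.drop 3).sum = 2 * k + 1 - (a + b + c) := by
    have h3 : (lam.take 3).sum + (lam.drop 3).sum = lam.sum := by
      conv_rhs => rw [← List.take_append_drop 3 lam]
      rw [List.sum_append]
    rw [take3_sum] at h3; omega
  have hperm : List.Perm ([a, b, c] ++ lam.drop 3)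
      (lam ++ List.replicate (3 - lam.length) 0) := by
    rw [← t3_eq lam]
    have h1 : List.Perm ((lam.take 3 ++ List.replicate (3 - lam.length) 0) ++ lam.drop 3)
        ((lam.take 3 ++ lam.drop 3) ++ List.replicate (3 - lam.length) 0) := by
      rw [List.append_assoc, List.append_assoc]
      exact List.Perm.append_left _ List.perm_append_comm
    rwa [List.take_append_drop] at h1
  have hsorted2 : (lam ++ List.replicate (3 - lam.length) 0).Pairwise (· ≥ ·) := by
    apply List.pairwise_append.2
    refine ⟨hls, ?_, ?_⟩
    · exact List.pairwise_replicate.2 (Or.inr le_rfl)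
    · intro x hx y hy
      have := List.eq_of_mem_replicate hy
      have := hlp x hx
      omega
  have hrs : rsort ([a, b, c] ++ lam.drop 3) = lam ++ List.replicate (3 - lam.length) 0 :=
    List.Perm.eq_of_pairwise' (rsort_sorted _) hsorted2 ((rsort_perm _).trans hperm)
  have hstr : strip (lam ++ List.replicate (3 - lam.length) 0) = lam := by
    have h1 : strip (lam ++ List.replicate (3 - lam.length) 0) =
        strip lam ++ strip (List.replicate (3 - lam.length) 0) := List.filter_append _ _
    have h2 : strip (List.replicate (3 - lam.length) 0) = [] := by
      simp [strip, List.filter_replicate]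
    rw [h1, h2, strip_eq_self hlp, List.append_nil]
  have e2 : smlink 3 (([a + p, b + p, c + p] ++ (m0 :: mr)), lam.drop 3) =
      (lam, m0 :: mr) := by
    rw [smlink3_eq (([a + p, b + p, c + p] ++ (m0 :: mr)), lam.drop 3)
      (a + p) (b + p) (c + p) (-p) rfl rfl rfl (by show -p = (lam.drop 3).sum + 1 - _; rw [hds]; ring)]
    have hsimp : [a + p + -p, b + p + -p, c + p + -p] = [a, b, c] := by
      simp [add_neg_cancel_right]
    rw [hsimp, hrs, hstr]
    have hdropL : (([a + p, b + p, c + p] ++ (m0 :: mr))).drop 3 = m0 :: mr := by simp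
    rw [hdropL, strip_eq_self hmp]
  rw [e2]

lemma length_le_sum {l : List ℤ} (h : ∀ x ∈ l, 0 < x) : (l.length : ℤ) ≤ l.sum := by
  induction l with
  | nil => simp
  | cons a t ih =>
    have ha := h a (by simp)
    have := ih (fun x hx => h x (by simp [hx]))
    simp only [List.length_cons, List.sum_cons]
    push_cast
    omega

lemma pos_sum_one {l : List ℤ} (h : ∀ x ∈ l, 0 < x) (hs : l.sum = 1) : l = [1] := by
  rcases l with _ | ⟨x, t⟩
  · simp at hs
  · have hx := h x (by simp)
    have ht := length_le_sum (fun y hy => h y (List.mem_cons_of_mem x hy))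
    simp only [List.sum_cons] at hs
    have hx1 : x = 1 := by omega
    have htl : (t.length : ℤ) = 0 := by omega
    have : t = [] := List.length_eq_zero_iff.1 (by exact_mod_cast htl)
    rw [hx1, this]

lemma decoration_I_zero : ∀ (n : ℕ) (Q : List ℤ × List ℤ), IsPartition Q.1 → IsPartition Q.2 →
    (∀ m < n, ValidLink 3 ((smlink 3)^[m] Q)) →
    (smlink 3)^[n] Q = (List.replicate 3 1, [1]) →
    Q.1.sum = 2 * Q.2.sum + 1 := by
  intro n
  induction n with
  | zero =>
    intro Q _ _ _ hend
    simp only [Function.iterate_zero, id_eq] at hend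
    subst hend
    decide
  | succ n ih =>
    intro Q h1 h2 hval hend
    have h1' := (smlink_partition Q h1).1
    have h2' := (smlink_partition Q h1).2
    have hval' : ∀ m < n, ValidLink 3 ((smlink 3)^[m] (smlink 3 Q)) := by
      intro m hm
      have := hval (m + 1) (by omega)
      rwa [Function.iterate_succ_apply] at this
    have hend' : (smlink 3)^[n] (smlink 3 Q) = (List.replicate 3 1, [1]) := by
      rwa [← Function.iterate_succ_apply]
    have hI := ih (smlink 3 Q) h1' h2' hval' hend'
    have h0 := hval 0 (by omega)
    simp only [Function.iterate_zero, id_eq] at h0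
    have hkey := I_smlink Q h1 h2.2 h0
    omega

/-- For a codimension-3 decoration `(λ, μ)` with `k = ∑μⱼ`, other than the
complete intersection pair `((1,1,1),(1))`: if `μ₁ + λ₁ + λ₂ ≤ k+1` then the
smallest minimal link of the smallest minimal link of `(λ, μ)` equals `(λ, μ)`
again; consequently every decoration satisfies `μ₁ + λ₁ + λ₂ > k + 1`. -/
theorem stmt3 (P : List ℤ × List ℤ) (k : ℤ) (hk : P.2.sum = k)
    (h : IsDecoration 3 P) :
    (P ≠ (([1, 1, 1] : List ℤ), ([1] : List ℤ)) →
      P.2.getD 0 0 + P.1.getD 0 0 + P.1.getD 1 0 ≤ k + 1 →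
      smlink 3 (smlink 3 P) = P) ∧
    k + 1 < P.2.getD 0 0 + P.1.getD 0 0 + P.1.getD 1 0 := by
  subst hk
  obtain ⟨h1, h2, n, hval, hend⟩ := h
  obtain ⟨P1, P2⟩ := P
  simp only at h1 h2 ⊢
  have hsum : P1.sum = 2 * P2.sum + 1 := decoration_I_zero n (P1, P2) h1 h2 hval hend
  have part1 : (P1, P2) ≠ (([1, 1, 1] : List ℤ), ([1] : List ℤ)) →
      P2.getD 0 0 + P1.getD 0 0 + P1.getD 1 0 ≤ P2.sum + 1 →
      smlink 3 (smlink 3 (P1, P2)) = (P1, P2) := by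
    intro hne hineq
    rcases hmu : P2 with _ | ⟨m0, mr⟩
    · subst hmu
      have hs0 : P1.sum = 1 := by simpa using hsum
      have hP1 : P1 = [1] := pos_sum_one h1.2 hs0
      subst hP1
      decide
    · exact hmu ▸ smlink_smlink P1 P2 h1 h2 (by rw [hmu]; simp) hsum hineq
  refine ⟨part1, ?_⟩
  by_contra hcon
  push_neg at hcon
  by_cases hP : (P1, P2) = (([1, 1, 1] : List ℤ), ([1] : List ℤ))
  · simp only [Prod.mk.injEq] at hP
    obtain ⟨rfl, rfl⟩ := hP
    exact absurd hcon (by decide)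
  · have h2' := part1 hP hcon
    have cyc : ∀ m, (smlink 3)^[m] (P1, P2) = (P1, P2) ∨
        (smlink 3)^[m] (P1, P2) = smlink 3 (P1, P2) := by
      intro m
      induction m with
      | zero => left; rfl
      | succ m ih =>
        rcases ih with ih | ih
        · right; rw [Function.iterate_succ_apply', ih]
        · left; rw [Function.iterate_succ_apply', ih, h2']
    rcases cyc n with hc | hc
    · rw [hc] at hend
      exact hP (by rw [hend]; rfl)
    · rw [hc] at hend
      have hPeq : (P1, P2) = smlink 3 ((List.replicate 3 1 : List ℤ), ([1] : List ℤ)) := by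
        rw [← hend, h2']
      have hP11 : (P1, P2) = (([1] : List ℤ), ([] : List ℤ)) :=
        hPeq.trans (by decide)
      rw [hP11] at hend
      have hfix : smlink 3 (([1] : List ℤ), ([] : List ℤ)) = (([1] : List ℤ), ([] : List ℤ)) := by
        decide
      rw [hfix] at hend
      exact absurd hend (by decide)
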